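/- Let C_1 = [[A_1, A_2],[0, I_{n-d}]] and D_1 = [[B_1, B_2],[0, I_{n-d}]] be n×n integer matrices, where A_1 and B_1 are nonsingular d×d integer matrices and A_2, B_2 are arbitrary integer matrices of appropriate sizes. Then A_1 is unimodular-permutation equivalent to B_1 if and only if C_1 is unimodular-permutation equivalent to D_1. -/

import Mathlib

/-- Unimodular-permutation equivalence of square integer matrices: `U X = Y P_σ`. -/
def UPEquiv {ι : Type*} [Fintype ι] [DecidableEq ι] (X Y : Matrix ι ι ℤ) : Prop :=
  ∃ U : Matrix ι ι ℤ, IsUnit U.det ∧ ∃ σ : Equiv.Perm ι, U * X = Y.submatrix id ⇑σ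


open Matrix

section RowLat
variable {ι : Type*} [Fintype ι] [DecidableEq ι]

/-- Row lattice of a square integer matrix. -/
def rowLat (X : Matrix ι ι ℤ) : Submodule ℤ (ι → ℤ) := Submodule.span ℤ (Set.range X)

/-- Linear equivalence of composing with a permutation. -/
def compE (σ : Equiv.Perm ι) : (ι → ℤ) ≃ₗ[ℤ] (ι → ℤ) where
  toFun v := v ∘ σ
  invFun v := v ∘ σ.symm
  map_add' _ _ := rfl
  map_smul' _ _ := rfl
  left_inv v := by ext i; simp
  right_inv v := by ext i; simp

@[simp] lemma compE_apply (σ : Equiv.Perm ι) (v : ι → ℤ) : compE σ v = v ∘ σ := rfl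
@[simp] lemma compE_symm_apply (σ : Equiv.Perm ι) (v : ι → ℤ) :
    (compE σ).symm v = v ∘ σ.symm := rfl

lemma row_mul_mem (U X : Matrix ι ι ℤ) (i : ι) : (U * X) i ∈ rowLat X := by
  have h : (U * X) i = ∑ k, U i k • X k := by
    ext j; simp [Matrix.mul_apply, Finset.sum_apply]
  rw [h]
  exact Submodule.sum_mem _ fun k _ =>
    Submodule.smul_mem _ _ (Submodule.subset_span ⟨k, rfl⟩)

lemma rowLat_mul_le (U X : Matrix ι ι ℤ) : rowLat (U * X) ≤ rowLat X := by
  rw [rowLat, Submodule.span_le]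
  rintro - ⟨i, rfl⟩
  exact row_mul_mem U X i

lemma rowLat_mul_eq {U : Matrix ι ι ℤ} (hU : IsUnit U.det) (X : Matrix ι ι ℤ) :
    rowLat (U * X) = rowLat X := by
  refine le_antisymm (rowLat_mul_le U X) ?_
  have h : X = U⁻¹ * (U * X) := by
    rw [← Matrix.mul_assoc, Matrix.nonsing_inv_mul U hU, Matrix.one_mul]
  conv_lhs => rw [h]
  exact rowLat_mul_le _ _

lemma exists_mul_of_le {X Y : Matrix ι ι ℤ} (h : rowLat Y ≤ rowLat X) :
    ∃ U : Matrix ι ι ℤ, U * X = Y := by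
  have hm : ∀ i, ∃ c : ι → ℤ, ∑ k, c k • X k = Y i := fun i =>
    (Submodule.mem_span_range_iff_exists_fun ℤ).1 (h (Submodule.subset_span ⟨i, rfl⟩))
  choose c hc using hm
  refine ⟨Matrix.of c, ?_⟩
  ext i j
  have := congrFun (hc i) j
  simpa [Matrix.mul_apply, Finset.sum_apply] using this

lemma eq_one_of_mul_eq {X W : Matrix ι ι ℤ} (hX : X.det ≠ 0) (h : W * X = X) :
    W = 1 := by
  have h2 : W * (X * X.adjugate) = X * X.adjugate := by
    rw [← Matrix.mul_assoc, h]
  rw [Matrix.mul_adjugate] at h2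
  rw [Matrix.mul_smul, Matrix.mul_one] at h2
  exact smul_right_injective (Matrix ι ι ℤ) hX h2

lemma rowLat_eq_iff {X Y : Matrix ι ι ℤ} (hX : X.det ≠ 0) :
    rowLat X = rowLat Y ↔ ∃ U : Matrix ι ι ℤ, IsUnit U.det ∧ U * X = Y := by
  constructor
  · intro h
    obtain ⟨U, hU⟩ := exists_mul_of_le h.ge
    obtain ⟨V, hV⟩ := exists_mul_of_le h.le
    have hVU : V * U = 1 := by
      apply eq_one_of_mul_eq hX
      rw [Matrix.mul_assoc, hU, hV]
    refine ⟨U, ?_, hU⟩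
    have : V.det * U.det = 1 := by rw [← Matrix.det_mul, hVU, Matrix.det_one]
    exact IsUnit.of_mul_eq_one _ ((mul_comm _ _).trans this)
  · rintro ⟨U, hU, rfl⟩
    exact (rowLat_mul_eq hU X).symm

lemma rowLat_submatrix (Y : Matrix ι ι ℤ) (σ : Equiv.Perm ι) :
    rowLat (Y.submatrix id ⇑σ) = (rowLat Y).map (compE σ : (ι → ℤ) →ₗ[ℤ] (ι → ℤ)) := by
  rw [rowLat, rowLat, ← Submodule.span_image]
  congr 1
  ext v
  constructor
  · rintro ⟨i, rfl⟩
    exact ⟨Y i, ⟨i, rfl⟩, rfl⟩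
  · rintro ⟨-, ⟨i, rfl⟩, rfl⟩
    exact ⟨i, rfl⟩

lemma upEquiv_iff {X Y : Matrix ι ι ℤ} (hX : X.det ≠ 0) :
    UPEquiv X Y ↔ ∃ σ : Equiv.Perm ι,
      rowLat X = (rowLat Y).map (compE σ : (ι → ℤ) →ₗ[ℤ] (ι → ℤ)) := by
  constructor
  · rintro ⟨U, hU, σ, hUX⟩
    refine ⟨σ, ?_⟩
    rw [← rowLat_submatrix, ← hUX, rowLat_mul_eq hU]
  · rintro ⟨σ, h⟩
    rw [← rowLat_submatrix] at h
    obtain ⟨U, hU, hUX⟩ := (rowLat_eq_iff hX).1 h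
    exact ⟨U, hU, σ, hUX⟩

end RowLat

section Blocks
variable {d m : ℕ}

/-- Restriction to the `inl` coordinates. -/
noncomputable def resL : ((Fin d ⊕ Fin m) → ℤ) →ₗ[ℤ] (Fin d → ℤ) :=
  LinearMap.funLeft ℤ ℤ Sum.inl

@[simp] lemma resL_apply (v : (Fin d ⊕ Fin m) → ℤ) : resL v = v ∘ Sum.inl := rfl

lemma rowLat_fromBlocks (A₁ : Matrix (Fin d) (Fin d) ℤ) (A₂ : Matrix (Fin d) (Fin m) ℤ) :
    rowLat (Matrix.fromBlocks A₁ A₂ (0 : Matrix (Fin m) (Fin d) ℤ)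
      (1 : Matrix (Fin m) (Fin m) ℤ)) = (rowLat A₁).comap resL := by
  set C := Matrix.fromBlocks A₁ A₂ (0 : Matrix (Fin m) (Fin d) ℤ) (1 : Matrix (Fin m) (Fin m) ℤ)
    with hC
  apply le_antisymm
  · rw [rowLat, Submodule.span_le]
    rintro - ⟨i, rfl⟩
    rcases i with i | i
    · have : resL (C (Sum.inl i)) = A₁ i := by
        ext j; simp [hC]
      refine SetLike.mem_coe.2 (Submodule.mem_comap.2 ?_)
      rw [this]
      exact Submodule.subset_span ⟨i, rfl⟩
    · have : resL (C (Sum.inr i)) = 0 := by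
        ext j; simp [hC]
      refine SetLike.mem_coe.2 (Submodule.mem_comap.2 ?_)
      rw [this]
      exact (rowLat A₁).zero_mem
  · intro v hv
    simp only [Submodule.mem_comap] at hv
    obtain ⟨c, hc⟩ := (Submodule.mem_span_range_iff_exists_fun ℤ).1 hv
    set w : (Fin d ⊕ Fin m) → ℤ := ∑ k, c k • C (Sum.inl k) with hw
    have hwmem : w ∈ rowLat C :=
      Submodule.sum_mem _ fun k _ =>
        Submodule.smul_mem _ _ (Submodule.subset_span ⟨Sum.inl k, rfl⟩)
    have hwl : ∀ j, w (Sum.inl j) = v (Sum.inl j) := by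
      intro j
      have := congrFun hc j
      simp only [Finset.sum_apply, Pi.smul_apply, smul_eq_mul] at this ⊢
      rw [hw]
      simp only [Finset.sum_apply, Pi.smul_apply, smul_eq_mul, hC]
      simpa using this
    have hv' : v = w + ∑ j, (v (Sum.inr j) - w (Sum.inr j)) • C (Sum.inr j) := by
      ext x
      rcases x with x | x
      · simp only [Pi.add_apply, Finset.sum_apply, Pi.smul_apply, smul_eq_mul, hC]
        simp [hwl x, Matrix.fromBlocks]
      · simp only [Pi.add_apply, Finset.sum_apply, Pi.smul_apply, smul_eq_mul, hC]
        simp [Matrix.fromBlocks, Matrix.one_apply]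
    rw [hv']
    exact Submodule.add_mem _ hwmem
      (Submodule.sum_mem _ fun j _ =>
        Submodule.smul_mem _ _ (Submodule.subset_span ⟨Sum.inr j, rfl⟩))

end Blocks

section Core
variable {d m : ℕ}

lemma single_correction {N : Submodule ℤ (Fin d → ℤ)} {v v' : Fin d → ℤ}
    (hfull : ∀ j, v j ≠ v' j → Pi.single j (1:ℤ) ∈ N) (hv : v ∈ N) : v' ∈ N := by
  have h : v' = v + ∑ j, (v' j - v j) • Pi.single j (1:ℤ) := by
    ext k
    simp only [Pi.add_apply, Finset.sum_apply, Pi.smul_apply, smul_eq_mul, Pi.single_apply,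
      mul_ite, mul_one, mul_zero, Finset.sum_ite_eq, Finset.mem_univ, if_true]
    ring
  rw [h]
  refine Submodule.add_mem _ hv (Submodule.sum_mem _ fun j _ => ?_)
  by_cases hj : v j = v' j
  · rw [hj, sub_self, zero_smul]; exact Submodule.zero_mem _
  · exact Submodule.smul_mem _ _ (hfull j hj)

lemma core_reverse {M N : Submodule ℤ (Fin d → ℤ)} (σ : Equiv.Perm (Fin d ⊕ Fin m))
    (h : (M.comap (resL (d := d) (m := m))) =
      (N.comap (resL (d := d) (m := m))).map (compE σ : _ →ₗ[ℤ] _)) :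
    ∃ τ : Equiv.Perm (Fin d), M = N.map (compE τ : _ →ₗ[ℤ] _) := by
  classical
  have hmem : ∀ w : (Fin d ⊕ Fin m) → ℤ,
      (w ∘ Sum.inl ∈ M) ↔ ((w ∘ ⇑σ.symm) ∘ Sum.inl ∈ N) := by
    intro w
    have h2 := Submodule.ext_iff.1 h w
    simp only [Submodule.mem_comap, Submodule.mem_map_equiv, resL_apply,
      compE_symm_apply] at h2
    exact h2
  set Af : Fin d → Prop := fun i => Pi.single i (1:ℤ) ∈ M with hAf
  set Bf : Fin d → Prop := fun j => Pi.single j (1:ℤ) ∈ N with hBf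
  -- key: non-full coordinates map to non-full inl coordinates
  have KEY : ∀ i, ¬ Af i → ∃ j, σ (Sum.inl i) = Sum.inl j ∧ ¬ Bf j := by
    intro i hi
    have hm := hmem (Pi.single (Sum.inl i : Fin d ⊕ Fin m) (1:ℤ))
    have hl : (Pi.single (Sum.inl i : Fin d ⊕ Fin m) (1:ℤ)) ∘ Sum.inl = Pi.single i (1:ℤ) := by
      ext k; simp [Pi.single_apply]
    rw [hl] at hm
    rcases hσ : σ (Sum.inl i) with j | j
    · refine ⟨j, rfl, ?_⟩
      have hr : ((Pi.single (Sum.inl i : Fin d ⊕ Fin m) (1:ℤ)) ∘ ⇑σ.symm) ∘ Sum.inl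
          = Pi.single j (1:ℤ) := by
        ext k
        simp only [Function.comp_apply, Pi.single_apply, Equiv.symm_apply_eq, hσ]
        simp
      rw [hr] at hm
      exact fun hb => hi (hm.2 hb)
    · exfalso
      apply hi
      have hr : ((Pi.single (Sum.inl i : Fin d ⊕ Fin m) (1:ℤ)) ∘ ⇑σ.symm) ∘ Sum.inl = 0 := by
        ext k
        simp only [Function.comp_apply, Pi.single_apply, Pi.zero_apply,
          Equiv.symm_apply_eq, hσ]
        simp
      rw [hr] at hm
      exact hm.2 (Submodule.zero_mem _)
  have KEY' : ∀ j, ¬ Bf j → ∃ i, σ.symm (Sum.inl j) = Sum.inl i ∧ ¬ Af i := by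
    intro j hj
    set w : (Fin d ⊕ Fin m) → ℤ := fun x => (Pi.single (Sum.inl j : Fin d ⊕ Fin m) (1:ℤ) : (Fin d ⊕ Fin m) → ℤ) (σ x) with hw
    have hm := hmem w
    have hr : (w ∘ ⇑σ.symm) ∘ Sum.inl = Pi.single j (1:ℤ) := by
      ext k; simp [hw, Pi.single_apply]
    rw [hr] at hm
    rcases hσ : σ.symm (Sum.inl j) with i | i
    · refine ⟨i, rfl, ?_⟩
      have hl : w ∘ Sum.inl = Pi.single i (1:ℤ) := by
        ext k
        simp only [hw, Function.comp_apply, Pi.single_apply,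
          Equiv.apply_eq_iff_eq_symm_apply, hσ]
        simp
      rw [hl] at hm
      exact fun ha => hj (hm.1 ha)
    · exfalso
      apply hj
      have hl : w ∘ Sum.inl = 0 := by
        ext k
        simp only [hw, Function.comp_apply, Pi.single_apply, Pi.zero_apply,
          Equiv.apply_eq_iff_eq_symm_apply, hσ]
        simp
      rw [hl] at hm
      exact hm.1 (Submodule.zero_mem _)
  -- build the bijection between non-full sets
  choose f hf1 hf2 using KEY
  choose g hg1 hg2 using KEY'
  set F : {i // ¬ Af i} → {j // ¬ Bf j} := fun x => ⟨f x.1 x.2, hf2 x.1 x.2⟩ with hF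
  set G : {j // ¬ Bf j} → {i // ¬ Af i} := fun x => ⟨g x.1 x.2, hg2 x.1 x.2⟩ with hG
  have hGF : ∀ x, G (F x) = x := by
    rintro ⟨i, hi⟩
    have h1 : σ (Sum.inl i) = Sum.inl (f i hi) := hf1 i hi
    have h2 : σ.symm (Sum.inl (f i hi)) = Sum.inl (g (f i hi) (hf2 i hi)) :=
      hg1 _ (hf2 i hi)
    have h3 : σ.symm (Sum.inl (f i hi)) = Sum.inl i := by
      rw [← h1, Equiv.symm_apply_apply]
    rw [h3] at h2
    simp only [hG, hF]
    exact Subtype.ext (Sum.inl_injective h2.symm)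
  have hFG : ∀ x, F (G x) = x := by
    rintro ⟨j, hj⟩
    have h1 : σ.symm (Sum.inl j) = Sum.inl (g j hj) := hg1 j hj
    have h2 : σ (Sum.inl (g j hj)) = Sum.inl (f (g j hj) (hg2 j hj)) :=
      hf1 _ (hg2 j hj)
    have h3 : σ (Sum.inl (g j hj)) = Sum.inl j := by
      rw [← h1, Equiv.apply_symm_apply]
    rw [h3] at h2
    simp only [hF, hG]
    exact Subtype.ext (Sum.inl_injective h2.symm)
  set eNon : {i // ¬ Af i} ≃ {j // ¬ Bf j} := ⟨F, G, hGF, hFG⟩ with heNon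
  have hcard : Fintype.card {i // Af i} = Fintype.card {j // Bf j} := by
    have h1 := Fintype.card_congr eNon
    have h2 := Fintype.card_subtype_compl Af
    have h3 := Fintype.card_subtype_compl Bf
    have h4 := Fintype.card_subtype_le Af
    have h5 := Fintype.card_subtype_le Bf
    omega
  set eFull : {i // Af i} ≃ {j // Bf j} := Fintype.equivOfCardEq hcard with heFull
  set τ : Equiv.Perm (Fin d) :=
    (Equiv.sumCompl Af).symm.trans ((Equiv.sumCongr eFull eNon).trans (Equiv.sumCompl Bf))
    with hτ
  have P1 : ∀ i, ¬ Af i → σ (Sum.inl i) = Sum.inl (τ i) ∧ ¬ Bf (τ i) := by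
    intro i hi
    have : τ i = (eNon ⟨i, hi⟩).1 := by
      simp [hτ, Equiv.sumCompl_symm_apply_of_neg hi]
    rw [this]
    exact ⟨hf1 i hi, (eNon ⟨i, hi⟩).2⟩
  have P2 : ∀ i, Af i → Bf (τ i) := by
    intro i hi
    have : τ i = (eFull ⟨i, hi⟩).1 := by
      simp [hτ, Equiv.sumCompl_symm_apply_of_pos hi]
    rw [this]
    exact (eFull ⟨i, hi⟩).2
  have P3 : ∀ j, ¬ Bf j → ¬ Af (τ.symm j) := by
    intro j hj ha
    exact hj (by simpa using P2 _ ha)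
  have P4 : ∀ j, ¬ Bf j → σ.symm (Sum.inl j) = Sum.inl (τ.symm j) := by
    intro j hj
    have := (P1 _ (P3 j hj)).1
    rw [Equiv.apply_symm_apply] at this
    rw [← this, Equiv.symm_apply_apply]
  refine ⟨τ, ?_⟩
  ext u
  rw [Submodule.mem_map_equiv, compE_symm_apply]
  constructor
  · intro hu
    have h1 : (Sum.elim u (0 : Fin m → ℤ)) ∘ Sum.inl ∈ M := by
      have : (Sum.elim u (0 : Fin m → ℤ)) ∘ Sum.inl = u := by ext k; simp
      rw [this]; exact hu
    have h2 := (hmem _).1 h1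
    refine single_correction (fun j hne => ?_) h2
    by_contra hj
    apply hne
    simp only [Function.comp_apply, P4 j hj, Sum.elim_inl]
  · intro hu
    set w : (Fin d ⊕ Fin m) → ℤ := fun x => Sum.elim (u ∘ ⇑τ.symm) (0 : Fin m → ℤ) (σ x)
      with hw
    have h2 : (w ∘ ⇑σ.symm) ∘ Sum.inl ∈ N := by
      have : (w ∘ ⇑σ.symm) ∘ Sum.inl = u ∘ ⇑τ.symm := by
        ext k; simp [hw]
      rw [this]; exact hu
    have h1 := (hmem w).2 h2
    refine single_correction (fun i hne => ?_) h1
    by_contra hi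
    apply hne
    simp only [hw, Function.comp_apply, (P1 i hi).1, Sum.elim_inl, Equiv.symm_apply_apply]

lemma core_forward {M N : Submodule ℤ (Fin d → ℤ)} (τ : Equiv.Perm (Fin d))
    (h : M = N.map (compE τ : _ →ₗ[ℤ] _)) :
    (M.comap (resL (d := d) (m := m))) =
      (N.comap (resL (d := d) (m := m))).map
        (compE (Equiv.sumCongr τ (Equiv.refl (Fin m))) : _ →ₗ[ℤ] _) := by
  ext w
  rw [Submodule.mem_comap, Submodule.mem_map_equiv, Submodule.mem_comap, h,
    Submodule.mem_map_equiv, compE_symm_apply, compE_symm_apply, resL_apply, resL_apply]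
  have : (w ∘ ⇑(Equiv.sumCongr τ (Equiv.refl (Fin m))).symm) ∘ Sum.inl
      = (w ∘ Sum.inl) ∘ ⇑τ.symm := by
    ext i; simp
  rw [this]

end Core

/-- `A₁ ≃_UP B₁` iff `[[A₁,A₂],[0,I]] ≃_UP [[B₁,B₂],[0,I]]` for nonsingular `A₁, B₁`. -/
theorem stmt6 {d m : ℕ}
    (A₁ B₁ : Matrix (Fin d) (Fin d) ℤ) (A₂ B₂ : Matrix (Fin d) (Fin m) ℤ)
    (hA : A₁.det ≠ 0) (hB : B₁.det ≠ 0) :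
    UPEquiv A₁ B₁ ↔
      UPEquiv (Matrix.fromBlocks A₁ A₂ (0 : Matrix (Fin m) (Fin d) ℤ) (1 : Matrix (Fin m) (Fin m) ℤ))
              (Matrix.fromBlocks B₁ B₂ (0 : Matrix (Fin m) (Fin d) ℤ) (1 : Matrix (Fin m) (Fin m) ℤ)) := by
  have hCdet : (Matrix.fromBlocks A₁ A₂ (0 : Matrix (Fin m) (Fin d) ℤ)
      (1 : Matrix (Fin m) (Fin m) ℤ)).det ≠ 0 := by
    rw [Matrix.det_fromBlocks_zero₂₁]
    simpa using hA
  rw [upEquiv_iff hA, upEquiv_iff hCdet]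
  simp only [rowLat_fromBlocks]
  constructor
  · rintro ⟨τ, hτ⟩
    exact ⟨_, core_forward τ hτ⟩
  · rintro ⟨σ, hσ⟩
    exact core_reverse σ hσ
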